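/- Let λ_{n,m} be the coefficient of z^m in Φ_n^* (with λ_{n,m} = 0 for m > n, λ_{n,0} = 1 for n ≥ 0). Then for all n ≥ 0 and m ≥ 1, λ_{n+1,m} = λ_{n,m} + ∑_{a=1}^{m−1} α_n·conj(α_{n−a})·λ_{n−a,m−a} + α_n·conj(α_{n−m}), where by convention α_{−1} = −1, α_k = 0 for k ≤ −2, and λ_{k,m} = δ_{m,0} for k < 0. -/
import Mathlib


open Polynomial

/-- The recursion `λ_{n+1,m} = λ_{n,m} + ∑_{a=1}^{m-1} α_n conj(α_{n-a}) λ_{n-a,m-a}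
+ α_n conj(α_{n-m})` for the coefficients of the reversed polynomials, with the
conventions `α_{-1} = -1`, `α_k = 0` for `k ≤ -2`, `λ_{k,m} = δ_{m,0}` for `k < 0`. -/
theorem lambda_recursion (α : ℤ → ℂ) (hα : ∀ n : ℤ, 0 ≤ n → ‖α n‖ < 1)
    (hm1 : α (-1) = -1) (hm2 : ∀ k : ℤ, k ≤ -2 → α k = 0)
    (Φ Ψ : ℕ → Polynomial ℂ) (h0 : Φ 0 = 1) (h0' : Ψ 0 = 1)
    (hrec : ∀ n : ℕ, Φ (n + 1) = X * Φ n - C ((starRingEnd ℂ) (α n)) * Ψ n)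
    (hrec' : ∀ n : ℕ, Ψ (n + 1) = Ψ n - C (α n) * X * Φ n)
    (lam : ℤ → ℕ → ℂ)
    (hlam : ∀ (n : ℕ) (m : ℕ), lam n m = (Ψ n).coeff m)
    (hlamneg : ∀ (k : ℤ), k < 0 → ∀ m : ℕ, lam k m = if m = 0 then 1 else 0) :
    ∀ (n : ℕ) (m : ℕ), 1 ≤ m →
      lam (n + 1) m = lam n m +
        (∑ a ∈ Finset.Ico 1 m, α n * (starRingEnd ℂ) (α (n - a)) * lam (n - a) (m - a)) +
        α n * (starRingEnd ℂ) (α (n - m)) := by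
  -- constant coefficient of Ψ is 1
  have A : ∀ n : ℕ, (Ψ n).coeff 0 = 1 := by
    intro n
    induction n with
    | zero => simp [h0']
    | succ n ih =>
      rw [hrec', mul_assoc]
      simp [coeff_sub, coeff_C_mul, mul_coeff_zero, coeff_X_zero, ih]
  have B : ∀ j : ℤ, lam j 0 = 1 := by
    intro j
    rcases lt_or_ge j 0 with hj | hj
    · simp [hlamneg j hj]
    · obtain ⟨n, rfl⟩ := Int.eq_ofNat_of_zero_le hj
      rw [hlam]; exact A n
  -- key coefficient formula for Φ
  have D : ∀ n k : ℕ, (Φ n).coeff k =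
      -∑ a ∈ Finset.Ico (1 : ℕ) (k + 2),
        (starRingEnd ℂ) (α ((n : ℤ) - (a : ℤ))) * lam ((n : ℤ) - (a : ℤ)) (k + 1 - a) := by
    intro n
    induction n with
    | zero =>
      intro k
      have hs : ∑ a ∈ Finset.Ico (1 : ℕ) (k + 2),
          (starRingEnd ℂ) (α (((0 : ℕ) : ℤ) - (a : ℤ))) * lam (((0 : ℕ) : ℤ) - (a : ℤ)) (k + 1 - a)
          = (starRingEnd ℂ) (α (-1)) * lam (-1) k := by
        rw [Finset.sum_eq_single_of_mem 1 (by simp)]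
        · norm_num
        · intro a ha hne
          have h2 : 2 ≤ a := by
            simp only [Finset.mem_Ico] at ha; omega
          have hz : α (((0 : ℕ) : ℤ) - (a : ℤ)) = 0 := hm2 _ (by omega)
          rw [hz, map_zero, zero_mul]
      rw [h0, hs, hm1, hlamneg (-1) (by norm_num)]
      simp only [coeff_one, map_neg, map_one]
      split <;> ring
    | succ n ih =>
      intro k
      rw [hrec n]
      cases k with
      | zero =>
        have hone : (1 : ℕ) ∈ Finset.Ico (1 : ℕ) (0 + 2) := by simp
        have hs : ∑ a ∈ Finset.Ico (1 : ℕ) (0 + 2),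
            (starRingEnd ℂ) (α (((n + 1 : ℕ) : ℤ) - (a : ℤ))) *
              lam (((n + 1 : ℕ) : ℤ) - (a : ℤ)) (0 + 1 - a)
            = (starRingEnd ℂ) (α (n : ℤ)) * lam (n : ℤ) 0 := by
          rw [Finset.sum_eq_single_of_mem 1 hone]
          · norm_num
          · intro a ha hne
            have : a = 1 := by simp only [Finset.mem_Ico] at ha; omega
            exact absurd this hne
        rw [hs]
        simp [coeff_sub, coeff_C_mul, mul_coeff_zero, coeff_X_zero, hlam, A n, B]
      | succ k =>
        have hreix : ∑ a ∈ Finset.Ico (2 : ℕ) (k + 3),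
            (starRingEnd ℂ) (α (((n + 1 : ℕ) : ℤ) - (a : ℤ))) *
              lam (((n + 1 : ℕ) : ℤ) - (a : ℤ)) (k + 2 - a)
            = ∑ a ∈ Finset.Ico (1 : ℕ) (k + 2),
            (starRingEnd ℂ) (α ((n : ℤ) - (a : ℤ))) * lam ((n : ℤ) - (a : ℤ)) (k + 1 - a) := by
          rw [Finset.sum_Ico_eq_sum_range, Finset.sum_Ico_eq_sum_range]
          apply Finset.sum_congr (by congr 1)
          intro i _
          have h1 : (((n + 1 : ℕ) : ℤ) - ((2 + i : ℕ) : ℤ)) = ((n : ℤ) - ((1 + i : ℕ) : ℤ)) := by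
            push_cast; ring
          have h2 : k + 2 - (2 + i) = k + 1 - (1 + i) := by omega
          rw [h1, h2]
        rw [Finset.sum_eq_sum_Ico_succ_bot (by omega), hreix]
        have h3 : (((n + 1 : ℕ) : ℤ) - ((1 : ℕ) : ℤ)) = (n : ℤ) := by push_cast; ring
        rw [h3]
        have h4 : k + 1 + 1 - (1 : ℕ) = k + 1 := by omega
        rw [h4]
        simp only [coeff_sub, coeff_C_mul, coeff_X_mul, ih k, hlam]
        ring
  intro n m hm
  obtain ⟨m, rfl⟩ : ∃ m', m = m' + 1 := ⟨m - 1, by omega⟩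
  have hcast : ((n : ℤ) + 1) = ((n + 1 : ℕ) : ℤ) := by push_cast; ring
  rw [hcast, hlam, hrec', mul_assoc]
  simp only [coeff_sub, coeff_C_mul, coeff_X_mul, D n m]
  rw [Finset.sum_Ico_succ_top (by omega : 1 ≤ m + 1)]
  simp only [Nat.sub_self, Nat.add_sub_cancel, B]
  have h7 : ∀ a ∈ Finset.Ico (1 : ℕ) (m + 1),
      α n * (starRingEnd ℂ) (α ((n : ℤ) - (a : ℤ))) * lam ((n : ℤ) - (a : ℤ)) (m + 1 - a)
      = α n * ((starRingEnd ℂ) (α ((n : ℤ) - (a : ℤ))) * lam ((n : ℤ) - (a : ℤ)) (m + 1 - a)) := by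
    intro a _; ring
  rw [Finset.sum_congr rfl h7, ← Finset.mul_sum, hlam]
  push_cast
  ring
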